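/- Let m ≥ 1 be a natural number and φ_1, …, φ_m ∈ (0,1] real constants. Let ψ_0, ψ_1, …, ψ_m : ℕ → ℝ be real sequences satisfying ψ_l(t) = ψ_{l−1}(t+1) − ψ_{l−1}(t) + φ_l·ψ_{l−1}(t) for all l = 1,…,m and all t ∈ ℕ. If ψ_m(t) ≥ 0 for all t ∈ ℕ and ψ_l(0) ≥ 0 for all l = 0,…,m−1, then ψ_l(t) ≥ 0 for all l = 0,…,m−1 and all t ∈ ℕ. -/
import Mathlib


/-- Forward invariance of the DHCBF hierarchy: if
`ψ_l(t) = ψ_{l-1}(t+1) - ψ_{l-1}(t) + φ_l·ψ_{l-1}(t)` for `l = 1,…,m`,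
`ψ_m(t) ≥ 0` for all `t`, and `ψ_l(0) ≥ 0` for `l = 0,…,m-1`, then
`ψ_l(t) ≥ 0` for all `l = 0,…,m-1` and all `t`. -/
theorem dhcbf_hierarchy_nonneg (m : ℕ) (hm : 1 ≤ m) (φ : ℕ → ℝ)
    (hφ : ∀ l : ℕ, 1 ≤ l → l ≤ m → 0 < φ l ∧ φ l ≤ 1)
    (ψ : ℕ → ℕ → ℝ)
    (hrec : ∀ l < m, ∀ t : ℕ,
      ψ (l + 1) t = ψ l (t + 1) - ψ l t + φ (l + 1) * ψ l t)
    (htop : ∀ t : ℕ, ψ m t ≥ 0)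
    (hinit : ∀ l < m, ψ l 0 ≥ 0) :
    ∀ l < m, ∀ t : ℕ, ψ l t ≥ 0 := by
  -- prove ∀ k, ∀ l, m = l + k → ∀ t, ψ l t ≥ 0, by induction on k
  have key : ∀ k : ℕ, ∀ l : ℕ, m = l + k → ∀ t : ℕ, ψ l t ≥ 0 := by
    intro k
    induction k with
    | zero =>
      intro l hl t
      obtain rfl : l = m := by omega
      exact htop t
    | succ k ih =>
      intro l hl t
      have hlm : l < m := by omega
      have hnext : ∀ t, ψ (l + 1) t ≥ 0 := ih (l + 1) (by omega)
      induction t with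
      | zero => exact hinit l hlm
      | succ t iht =>
        have h := hrec l hlm t
        have hφl := hφ (l + 1) (by omega) (by omega)
        have : ψ l (t + 1) = ψ (l + 1) t + (1 - φ (l + 1)) * ψ l t := by
          rw [h]; ring
        rw [this]
        have h1 : (0:ℝ) ≤ (1 - φ (l + 1)) * ψ l t :=
          mul_nonneg (by linarith [hφl.2]) iht
        linarith [hnext t]
  intro l hl
  exact key (m - l) l (by omega)
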